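/- (Proposition 1: correctness of the supervised objective.) Let X and Y be finite types and let p_S and p_T be probability mass functions on X × Y with equal supports (p_S(x,y) > 0 if and only if p_T(x,y) > 0), satisfying factorizable joint shift: there exist U₀ : X → ℝ≥0 and V₀ : Y → ℝ≥0 with p_T(x,y) = U₀(x)·V₀(y)·p_S(x,y) for all (x,y). For functions U : X → ℝ with U > 0 and V : Y → ℝ with V > 0, define L_sup(U, V) = Σ_{x,y} p_S(x,y)·log(1 + U(x)V(y)) + Σ_{x,y} p_T(x,y)·log(1 + 1/(U(x)V(y))). Then a pair (U, V) of positive functions attains the minimum of L_sup over all pairs of positive functions if and only if U(x)·V(y) = p_T(x,y)/p_S(x,y) (= U₀(x)·V₀(y)) for every (x,y) with p_S(x,y) > 0. -/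

import Mathlib

open Real

private lemma key_strict (a b w : ℝ) (ha : 0 < a) (hb : 0 < b) (hw : 0 < w)
    (hne : w ≠ b / a) :
    a * Real.log (1 + b / a) + b * Real.log (1 + 1 / (b / a))
      < a * Real.log (1 + w) + b * Real.log (1 + 1 / w) := by
  set r := b / a with hrdef
  have hr : 0 < r := div_pos hb ha
  have h1w : (0:ℝ) < 1 + w := by linarith
  have h1r : (0:ℝ) < 1 + r := by linarith
  have hlw : Real.log (1 + 1 / w) = Real.log (1 + w) - Real.log w := by
    rw [show 1 + 1 / w = (1 + w) / w by field_simp; ring, Real.log_div h1w.ne' hw.ne']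
  have hlr : Real.log (1 + 1 / r) = Real.log (1 + r) - Real.log r := by
    rw [show 1 + 1 / r = (1 + r) / r by field_simp; ring, Real.log_div h1r.ne' hr.ne']
  set t1 := (1 + r) / (1 + w) with ht1def
  set t2 := w * (1 + r) / (r * (1 + w)) with ht2def
  have ht1 : 0 < t1 := div_pos h1r h1w
  have ht2 : 0 < t2 := div_pos (mul_pos hw h1r) (mul_pos hr h1w)
  have ht1ne : t1 ≠ 1 := by
    intro h
    apply hne
    have : 1 + r = 1 + w := by
      rw [ht1def, div_eq_one_iff_eq h1w.ne'] at h; linarith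
    linarith
  have hlog1 : Real.log t1 = Real.log (1 + r) - Real.log (1 + w) :=
    Real.log_div h1r.ne' h1w.ne'
  have hlog2 : Real.log t2 = Real.log w + Real.log (1 + r) - (Real.log r + Real.log (1 + w)) := by
    rw [ht2def, Real.log_div (by positivity) (by positivity),
      Real.log_mul hw.ne' h1r.ne', Real.log_mul hr.ne' h1w.ne']
  have hb1 : Real.log t1 < t1 - 1 := Real.log_lt_sub_one_of_pos ht1 ht1ne
  have hb2 : Real.log t2 ≤ t2 - 1 := Real.log_le_sub_one_of_pos ht2
  have hzero : a * (t1 - 1) + b * (t2 - 1) = 0 := by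
    rw [ht1def, ht2def, hrdef]
    field_simp
    ring
  have hA : a * Real.log t1 < a * (t1 - 1) := mul_lt_mul_of_pos_left hb1 ha
  have hB : b * Real.log t2 ≤ b * (t2 - 1) := mul_le_mul_of_nonneg_left hb2 hb.le
  rw [hlw, hlr]
  rw [hlog1] at hA
  rw [hlog2] at hB
  nlinarith [hA, hB, hzero]

private lemma key_le (a b w : ℝ) (ha : 0 < a) (hb : 0 < b) (hw : 0 < w) :
    a * Real.log (1 + b / a) + b * Real.log (1 + 1 / (b / a))
      ≤ a * Real.log (1 + w) + b * Real.log (1 + 1 / w) := by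
  by_cases h : w = b / a
  · rw [h]
  · exact (key_strict a b w ha hb hw h).le


/-- Proposition 1 (correctness of the supervised objective): under factorizable joint
shift with equal supports, a pair of positive factors `(U, V)` minimizes the supervised
objective `L_sup` over all pairs of positive functions if and only if `U(x)·V(y)` equals
the true joint importance `p_T(x,y)/p_S(x,y)` on the support of `p_S`. -/
theorem supervised_objective_correctness
    {X Y : Type*} [Fintype X] [Fintype Y]
    (pS pT : X × Y → ℝ)
    (hSnn : ∀ xy, 0 ≤ pS xy) (hSsum : ∑ xy : X × Y, pS xy = 1)
    (hTnn : ∀ xy, 0 ≤ pT xy) (hTsum : ∑ xy : X × Y, pT xy = 1)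
    (hsupp : ∀ xy : X × Y, 0 < pS xy ↔ 0 < pT xy)
    (hFJS : ∃ U₀ : X → NNReal, ∃ V₀ : Y → NNReal,
      ∀ x y, pT (x, y) = (U₀ x : ℝ) * (V₀ y : ℝ) * pS (x, y))
    (U : X → ℝ) (V : Y → ℝ) (hU : ∀ x, 0 < U x) (hV : ∀ y, 0 < V y) :
    (∀ (U' : X → ℝ) (V' : Y → ℝ), (∀ x, 0 < U' x) → (∀ y, 0 < V' y) →
        (∑ xy : X × Y, pS xy * Real.log (1 + U xy.1 * V xy.2))
            + (∑ xy : X × Y, pT xy * Real.log (1 + 1 / (U xy.1 * V xy.2)))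
          ≤ (∑ xy : X × Y, pS xy * Real.log (1 + U' xy.1 * V' xy.2))
            + (∑ xy : X × Y, pT xy * Real.log (1 + 1 / (U' xy.1 * V' xy.2))))
      ↔ ∀ (x : X) (y : Y), 0 < pS (x, y) → U x * V y = pT (x, y) / pS (x, y) := by
  obtain ⟨U₀, V₀, hUV⟩ := hFJS
  -- zero source mass implies zero target mass
  have hz : ∀ xy, pS xy = 0 → pT xy = 0 := by
    intro xy h
    by_contra hne
    have : 0 < pT xy := lt_of_le_of_ne (hTnn xy) (Ne.symm hne)
    have := (hsupp xy).mpr this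
    linarith
  -- the per-point objective
  set G : X × Y → ℝ → ℝ := fun xy w =>
    pS xy * Real.log (1 + w) + pT xy * Real.log (1 + 1 / w) with hGdef
  have comb : ∀ (A : X → ℝ) (B : Y → ℝ),
      (∑ xy : X × Y, pS xy * Real.log (1 + A xy.1 * B xy.2))
        + (∑ xy : X × Y, pT xy * Real.log (1 + 1 / (A xy.1 * B xy.2)))
      = ∑ xy : X × Y, G xy (A xy.1 * B xy.2) := by
    intro A B
    rw [← Finset.sum_add_distrib]
  -- patched optimal factors
  set Us : X → ℝ := fun x => if 0 < (U₀ x : ℝ) then (U₀ x : ℝ) else 1 with hUsdef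
  set Vs : Y → ℝ := fun y => if 0 < (V₀ y : ℝ) then (V₀ y : ℝ) else 1 with hVsdef
  have hUs : ∀ x, 0 < Us x := by
    intro x
    simp only [hUsdef]
    split
    · assumption
    · exact one_pos
  have hVs : ∀ y, 0 < Vs y := by
    intro y
    simp only [hVsdef]
    split
    · assumption
    · exact one_pos
  have hstar : ∀ xy : X × Y, 0 < pS xy → Us xy.1 * Vs xy.2 = pT xy / pS xy := by
    rintro ⟨x, y⟩ hS
    have hT : 0 < pT (x, y) := (hsupp (x, y)).mp hS
    have heq := hUV x y
    have hU0 : 0 < (U₀ x : ℝ) := by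
      by_contra h
      push_neg at h
      have : (U₀ x : ℝ) = 0 := le_antisymm h (U₀ x).coe_nonneg
      rw [this] at heq; simp at heq; linarith
    have hV0 : 0 < (V₀ y : ℝ) := by
      by_contra h
      push_neg at h
      have : (V₀ y : ℝ) = 0 := le_antisymm h (V₀ y).coe_nonneg
      rw [this] at heq; simp at heq; linarith
    simp only [hUsdef, hVsdef, if_pos hU0, if_pos hV0]
    rw [heq]
    field_simp
  -- per-point minimality
  have hGmin : ∀ (xy : X × Y) (w : ℝ), 0 < w →
      G xy (pT xy / pS xy) ≤ G xy w := by
    intro xy w hw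
    rcases eq_or_lt_of_le (hSnn xy) with h0 | hS
    · simp [hGdef, ← h0, hz xy h0.symm]
    · exact key_le (pS xy) (pT xy) w hS ((hsupp xy).mp hS) hw
  have hGzero : ∀ (xy : X × Y) (w : ℝ), pS xy = 0 → G xy w = 0 := by
    intro xy w h
    simp [hGdef, h, hz xy h]
  constructor
  · -- minimality → pointwise identity
    intro hmin x y hSxy
    have hle := hmin Us Vs hUs hVs
    rw [comb, comb] at hle
    have htermwise : ∀ xy ∈ Finset.univ (α := X × Y),
        G xy (Us xy.1 * Vs xy.2) ≤ G xy (U xy.1 * V xy.2) := by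
      intro xy _
      rcases eq_or_lt_of_le (hSnn xy) with h0 | hS
      · rw [hGzero xy _ h0.symm, hGzero xy _ h0.symm]
      · rw [hstar xy hS]
        exact hGmin xy _ (mul_pos (hU xy.1) (hV xy.2))
    have hsums : ∑ xy : X × Y, G xy (Us xy.1 * Vs xy.2)
        = ∑ xy : X × Y, G xy (U xy.1 * V xy.2) :=
      le_antisymm (Finset.sum_le_sum htermwise) hle
    have heach := (Finset.sum_eq_sum_iff_of_le htermwise).mp hsums (x, y) (Finset.mem_univ _)
    by_contra hne
    have hT : 0 < pT (x, y) := (hsupp (x, y)).mp hSxy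
    have := key_strict (pS (x, y)) (pT (x, y)) (U x * V y) hSxy hT
      (mul_pos (hU x) (hV y)) hne
    rw [hstar (x, y) hSxy] at heach
    simp only [hGdef] at heach
    linarith
  · -- pointwise identity → minimality
    intro hid U' V' hU' hV'
    rw [comb, comb]
    apply Finset.sum_le_sum
    rintro ⟨x, y⟩ _
    rcases eq_or_lt_of_le (hSnn (x, y)) with h0 | hS
    · rw [hGzero (x, y) _ h0.symm, hGzero (x, y) _ h0.symm]
    · rw [hid x y hS]
      exact hGmin (x, y) _ (mul_pos (hU' x) (hV' y))
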